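/- Let A, B be complex m×n matrices and Δ = A⊗B − B⊗A. If the null space of Δ is nonzero, then it contains a nonzero strongly decomposable vector, i.e., there exists a nonzero x ∈ ℂⁿ with Δ(x⊗x) = 0. -/

import Mathlib

open Matrix Kronecker

/-- Kronecker product of two vectors. -/
def kronVec {n : ℕ} (x y : Fin n → ℂ) : Fin n × Fin n → ℂ := fun p => x p.1 * y p.2

namespace Stmt2Aux

open Matrix

/-- A matrix all of whose `mulVec`s vanish is zero. -/
lemma eq_zero_of_mulVec {p q : ℕ} {M : Matrix (Fin p) (Fin q) ℂ}
    (h : ∀ x, M.mulVec x = 0) : M = 0 := by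
  ext i j
  have := congrFun (h (Pi.single j 1)) i
  simpa [Matrix.mulVec_single] using this

/-- A square matrix acting as the identity is the identity. -/
lemma eq_one_of_mulVec {p : ℕ} {M : Matrix (Fin p) (Fin p) ℂ}
    (h : ∀ x, M.mulVec x = x) : M = 1 := by
  ext i j
  have := congrFun (h (Pi.single j 1)) i
  simp only [Matrix.mulVec_single, mul_one, MulOpposite.op_one, one_smul, Matrix.col_apply] at this
  simp [this, Matrix.one_apply, Pi.single_apply, eq_comm]

lemma cancel_left {m n p : ℕ} {A : Matrix (Fin m) (Fin n) ℂ}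
    (hA : ∀ x, A.mulVec x = 0 → x = 0) {M : Matrix (Fin n) (Fin p) ℂ}
    (h : A * M = 0) : M = 0 := by
  ext i j
  have h1 : A.mulVec (fun r => M r j) = 0 := by
    ext s
    have := congrFun (congrFun h s) j
    simpa [Matrix.mul_apply, Matrix.mulVec, dotProduct] using this
  exact congrFun (hA _ h1) i

lemma cancel_right {m n p : ℕ} {A : Matrix (Fin m) (Fin n) ℂ}
    (hA : ∀ x, A.mulVec x = 0 → x = 0) {M : Matrix (Fin p) (Fin n) ℂ}
    (h : M * Aᵀ = 0) : M = 0 := by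
  have h2 : A * Mᵀ = 0 := by
    have := congrArg Matrix.transpose h
    simpa [Matrix.transpose_mul] using this
  have := cancel_left hA h2
  have := congrArg Matrix.transpose this
  simpa using this

/-- Key lemma: if every nonzero member of the pencil `c•A + d•B` is injective,
then the Kronecker commutator equation `A Z Bᵀ = B Z Aᵀ` forces `Z = 0`. -/
lemma key : ∀ n : ℕ, ∀ m : ℕ, ∀ A B : Matrix (Fin m) (Fin n) ℂ,
    (∀ c d : ℂ, ¬(c = 0 ∧ d = 0) → ∀ x : Fin n → ℂ, (c • A + d • B).mulVec x = 0 → x = 0) →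
    ∀ Z : Matrix (Fin n) (Fin n) ℂ, A * Z * Bᵀ = B * Z * Aᵀ → Z = 0 := by
  intro n
  induction n using Nat.strong_induction_on with
  | _ n IH =>
  intro m A B hpencil Z hZ
  rcases Nat.eq_zero_or_pos n with hn | hn
  · subst hn; ext i j; exact i.elim0
  -- A is injective
  have hA : ∀ x : Fin n → ℂ, A.mulVec x = 0 → x = 0 := by
    intro x hx
    refine hpencil 1 0 (by simp) x ?_
    simpa using hx
  -- the subspace K = B⁻¹(range A)
  set U : Submodule ℂ (Fin m → ℂ) := LinearMap.range A.mulVecLin with hU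
  set K : Submodule ℂ (Fin n → ℂ) := U.comap B.mulVecLin with hK
  have hAinj : Function.Injective A.mulVecLin := by
    rw [← LinearMap.ker_eq_bot, Matrix.ker_mulVecLin_eq_bot_iff]
    exact hA
  -- K is a proper subspace
  have hKne : K ≠ ⊤ := by
    intro htop
    have hBA : ∀ x : Fin n → ℂ, B.mulVecLin x ∈ U := by
      intro x
      have hxK : x ∈ K := htop ▸ Submodule.mem_top
      exact Submodule.mem_comap.mp hxK
    let e := LinearEquiv.ofInjective A.mulVecLin hAinj
    let f : (Fin n → ℂ) →ₗ[ℂ] (Fin n → ℂ) :=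
      e.symm.toLinearMap ∘ₗ (B.mulVecLin.codRestrict U hBA)
    have hAf : ∀ x, A.mulVecLin (f x) = B.mulVecLin x := by
      intro x
      have h1 : e (f x) = B.mulVecLin.codRestrict U hBA x := by
        simp [f]
      have h2 : (e (f x) : Fin m → ℂ) = A.mulVecLin (f x) := rfl
      rw [← h2, h1]; rfl
    haveI : Nontrivial (Fin n → ℂ) := by
      have : 0 < n := hn
      exact ⟨Pi.single ⟨0, this⟩ 1, 0, by
        intro hcon
        have := congrFun hcon ⟨0, this⟩
        simp [Pi.single_apply] at this⟩
    obtain ⟨μ, hμ⟩ := Module.End.exists_eigenvalue f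
    obtain ⟨x, hx⟩ := hμ.exists_hasEigenvector
    have hx0 : x ≠ 0 := hx.right
    have hfx : f x = μ • x := hx.apply_eq_smul
    have hBx : B.mulVec x = μ • A.mulVec x := by
      have := hAf x
      rw [hfx] at this
      simpa [Matrix.mulVecLin_apply] using this.symm
    have : (μ • A + (-1 : ℂ) • B).mulVec x = 0 := by
      rw [Matrix.add_mulVec, Matrix.smul_mulVec, Matrix.smul_mulVec, hBx]
      simp
    exact hx0 (hpencil μ (-1) (by simp) x this)
  haveI : FiniteDimensional ℂ (Fin n → ℂ) := by infer_instance
  set k := Module.finrank ℂ K with hkdef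
  have hk : k < n := by
    have h1 : k < Module.finrank ℂ (Fin n → ℂ) :=
      Submodule.finrank_lt hKne
    simpa [Module.finrank_fin_fun] using h1
  -- a basis of K, as the columns of a matrix P
  let b : Module.Basis (Fin k) ℂ K := Module.finBasis ℂ K
  let P : Matrix (Fin n) (Fin k) ℂ := Matrix.of fun i j => (b j : Fin n → ℂ) i
  have hPv : ∀ y : Fin k → ℂ, P.mulVec y = ((∑ j, y j • b j : K) : Fin n → ℂ) := by
    intro y
    ext i
    simp [P, Matrix.mulVec, dotProduct, mul_comm]
  have hPinj : ∀ y : Fin k → ℂ, P.mulVec y = 0 → y = 0 := by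
    intro y hy
    rw [hPv] at hy
    have h0 : (∑ j, y j • b j : K) = 0 := by
      exact_mod_cast Subtype.ext hy
    have := Fintype.linearIndependent_iff.mp b.linearIndependent y h0
    funext j; exact this j
  have hmemP : ∀ v : Fin n → ℂ, v ∈ K → ∃ y : Fin k → ℂ, P.mulVec y = v := by
    intro v hv
    refine ⟨fun j => b.repr ⟨v, hv⟩ j, ?_⟩
    rw [hPv]
    have := b.sum_repr ⟨v, hv⟩
    rw [this]
  -- the matrix T with A * T = B * P
  have hTex : ∀ j : Fin k, ∃ t : Fin n → ℂ, A.mulVec t = B.mulVec (b j : Fin n → ℂ) := by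
    intro j
    have hj : (b j : Fin n → ℂ) ∈ K := (b j).2
    obtain ⟨t, ht⟩ := Submodule.mem_comap.mp hj
    exact ⟨t, by simpa [Matrix.mulVecLin_apply] using ht⟩
  choose t ht using hTex
  let T : Matrix (Fin n) (Fin k) ℂ := Matrix.of fun i j => t j i
  have hAT : A * T = B * P := by
    ext i j
    have := congrFun (ht j) i
    simpa [Matrix.mul_apply, Matrix.mulVec, dotProduct, T, P] using this
  -- an annihilator matrix C with C.mulVec v = 0 ↔ v ∈ U
  obtain ⟨U', hU'⟩ := U.exists_isCompl
  let proj := Submodule.projectionOnto U' U hU'.symm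
  let C : Matrix (Fin m) (Fin m) ℂ := LinearMap.toMatrix' (U'.subtype ∘ₗ proj)
  have hCv : ∀ v : Fin m → ℂ, C.mulVec v = (proj v : Fin m → ℂ) := by
    intro v
    rw [show C.mulVec v = Matrix.toLin' C v from rfl, Matrix.toLin'_toMatrix']
    rfl
  have hC : ∀ v : Fin m → ℂ, C.mulVec v = 0 ↔ v ∈ U := by
    intro v
    rw [hCv]
    constructor
    · intro hv
      have h0 : proj v = 0 := by
        exact_mod_cast Subtype.ext hv
      have : v ∈ LinearMap.ker proj := h0
      rwa [Submodule.ker_projectionOnto] at this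
    · intro hv
      have : proj v = 0 := by
        have : v ∈ LinearMap.ker proj := by
          rwa [Submodule.ker_projectionOnto]
        exact this
      rw [this]; rfl
  have hCA : C * A = 0 := by
    apply eq_zero_of_mulVec
    intro x
    rw [← Matrix.mulVec_mulVec]
    exact (hC _).mpr ⟨x, rfl⟩
  -- columns of any solution of the commutator equation lie in K
  have hstep : ∀ W : Matrix (Fin n) (Fin n) ℂ, A * W * Bᵀ = B * W * Aᵀ →
      ∀ j, (fun r => W r j) ∈ K := by
    intro W hW j
    have h1 : C * B * W * Aᵀ = 0 := by
      calc C * B * W * Aᵀ = C * (B * W * Aᵀ) := by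
            rw [Matrix.mul_assoc, Matrix.mul_assoc, Matrix.mul_assoc]
        _ = C * (A * W * Bᵀ) := by rw [hW]
        _ = (C * A) * (W * Bᵀ) := by rw [Matrix.mul_assoc, Matrix.mul_assoc]
        _ = 0 := by rw [hCA, Matrix.zero_mul]
    have h2 : C * B * W = 0 := cancel_right hA h1
    have h3 : (C * B).mulVec (fun r => W r j) = 0 := by
      ext s
      have := congrFun (congrFun h2 s) j
      simpa [Matrix.mul_apply, Matrix.mulVec, dotProduct] using this
    have h4 : C.mulVec (B.mulVec (fun r => W r j)) = 0 := by
      rw [Matrix.mulVec_mulVec]; exact h3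
    exact Submodule.mem_comap.mpr ((hC _).mp h4)
  -- factor any such matrix through P
  have hfac : ∀ W : Matrix (Fin n) (Fin n) ℂ, (∀ j, (fun r => W r j) ∈ K) →
      ∃ M : Matrix (Fin k) (Fin n) ℂ, W = P * M := by
    intro W hW
    choose y hy using fun j => hmemP _ (hW j)
    refine ⟨Matrix.of fun i j => y j i, ?_⟩
    ext i j
    have := congrFun (hy j) i
    simpa [Matrix.mul_apply, Matrix.mulVec, dotProduct] using this.symm
  obtain ⟨M, hM⟩ := hfac Z (hstep Z hZ)
  have hZt : A * Zᵀ * Bᵀ = B * Zᵀ * Aᵀ := by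
    have := congrArg Matrix.transpose hZ
    simpa [Matrix.transpose_mul, Matrix.mul_assoc] using this.symm
  obtain ⟨N, hN⟩ := hfac Zᵀ (hstep Zᵀ hZt)
  have hZN : Z = Nᵀ * Pᵀ := by
    have := congrArg Matrix.transpose hN
    simpa [Matrix.transpose_mul] using this
  -- a left inverse L of P
  obtain ⟨g, hg⟩ := LinearMap.exists_leftInverse_of_injective P.mulVecLin
    (Matrix.ker_mulVecLin_eq_bot_iff.mpr hPinj)
  let L : Matrix (Fin k) (Fin n) ℂ := LinearMap.toMatrix' g
  have hLv : ∀ w, L.mulVec w = g w := by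
    intro w
    rw [show L.mulVec w = Matrix.toLin' L w from rfl, Matrix.toLin'_toMatrix']
  have hLP : L * P = 1 := by
    apply eq_one_of_mulVec
    intro v
    rw [← Matrix.mulVec_mulVec, hLv]
    have : g (P.mulVecLin v) = (g ∘ₗ P.mulVecLin) v := rfl
    rw [show P.mulVec v = P.mulVecLin v from rfl, this, hg]
    rfl
  -- Z = P * Y * Pᵀ
  set Y : Matrix (Fin k) (Fin k) ℂ := L * Nᵀ with hYdef
  have hZfac : Z = P * Y * Pᵀ := by
    have hMeq : M = Y * Pᵀ := by
      have h1 : M = L * Z := by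
        rw [hM, ← Matrix.mul_assoc, hLP, Matrix.one_mul]
      rw [h1, hZN, ← Matrix.mul_assoc, hYdef]
    rw [hM, hMeq, ← Matrix.mul_assoc]
  -- the small commutator equation
  have hTA : Tᵀ * Aᵀ = Pᵀ * Bᵀ := by
    rw [← Matrix.transpose_mul, ← Matrix.transpose_mul, hAT]
  have h2 : A * (P * Y * Tᵀ) * Aᵀ = A * Z * Bᵀ := by
    rw [hZfac]
    simp only [Matrix.mul_assoc, hTA]
  have h3 : A * (T * Y * Pᵀ) * Aᵀ = B * Z * Aᵀ := by
    rw [hZfac]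
    simp only [← Matrix.mul_assoc]
    rw [hAT]
  have hsmall0 : A * (P * Y * Tᵀ - T * Y * Pᵀ) * Aᵀ = 0 := by
    rw [Matrix.mul_sub, Matrix.sub_mul, h2, h3, hZ, sub_self]
  have hsmall : P * Y * Tᵀ = T * Y * Pᵀ := by
    have hAW : A * (P * Y * Tᵀ - T * Y * Pᵀ) = 0 := cancel_right hA hsmall0
    have := cancel_left hA hAW
    exact sub_eq_zero.mp this
  -- the small pencil is everywhere injective
  have hpencil' : ∀ c d : ℂ, ¬(c = 0 ∧ d = 0) → ∀ x : Fin k → ℂ,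
      (c • P + d • T).mulVec x = 0 → x = 0 := by
    intro c d hcd x hx
    have h1 : (c • A + d • B).mulVec (P.mulVec x) = 0 := by
      have e1 : (c • A + d • B).mulVec (P.mulVec x) =
          A.mulVec ((c • P + d • T).mulVec x) := by
        rw [Matrix.add_mulVec, Matrix.add_mulVec, Matrix.smul_mulVec,
          Matrix.smul_mulVec, Matrix.smul_mulVec, Matrix.smul_mulVec,
          Matrix.mulVec_add, Matrix.mulVec_smul, Matrix.mulVec_smul,
          Matrix.mulVec_mulVec, Matrix.mulVec_mulVec, Matrix.mulVec_mulVec, hAT]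
      rw [e1, hx, Matrix.mulVec_zero]
    exact hPinj x (hpencil c d hcd _ h1)
  -- apply the induction hypothesis
  have hY : Y = 0 := IH k hk n P T hpencil' Y hsmall
  rw [hZfac, hY, Matrix.mul_zero, Matrix.zero_mul]

lemma kron_mulVec {m n : ℕ} (M N : Matrix (Fin m) (Fin n) ℂ) (v : Fin n × Fin n → ℂ)
    (p : Fin m × Fin m) :
    ((M ⊗ₖ N).mulVec v) p = ∑ a : Fin n, ∑ c : Fin n, M p.1 a * N p.2 c * v (a, c) := by
  simp [Matrix.mulVec, dotProduct, Fintype.sum_prod_type, mul_assoc]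

end Stmt2Aux

theorem stmt_2 {m n : ℕ} (A B : Matrix (Fin m) (Fin n) ℂ)
    (h : ∃ z : Fin n × Fin n → ℂ, z ≠ 0 ∧ (A ⊗ₖ B - B ⊗ₖ A).mulVec z = 0) :
    ∃ x : Fin n → ℂ, x ≠ 0 ∧ (A ⊗ₖ B - B ⊗ₖ A).mulVec (kronVec x x) = 0 := by
  classical
  obtain ⟨z, hz0, hz⟩ := h
  by_cases hp : ∀ c d : ℂ, ¬(c = 0 ∧ d = 0) → ∀ x : Fin n → ℂ,
      (c • A + d • B).mulVec x = 0 → x = 0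
  · exfalso
    set Z : Matrix (Fin n) (Fin n) ℂ := Matrix.of fun i j => z (i, j) with hZdef
    have hZ : A * Z * Bᵀ = B * Z * Aᵀ := by
      ext i j
      have h0 := congrFun hz (i, j)
      rw [Matrix.sub_mulVec] at h0
      have h1 : ((A ⊗ₖ B).mulVec z) (i, j) = (A * Z * Bᵀ) i j := by
        rw [Stmt2Aux.kron_mulVec]
        rw [Finset.sum_comm]
        simp only [Matrix.mul_apply, Matrix.transpose_apply, Finset.sum_mul]
        apply Finset.sum_congr rfl; intro c _
        apply Finset.sum_congr rfl; intro a _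
        simp [hZdef]; ring
      have h2 : ((B ⊗ₖ A).mulVec z) (i, j) = (B * Z * Aᵀ) i j := by
        rw [Stmt2Aux.kron_mulVec]
        rw [Finset.sum_comm]
        simp only [Matrix.mul_apply, Matrix.transpose_apply, Finset.sum_mul]
        apply Finset.sum_congr rfl; intro c _
        apply Finset.sum_congr rfl; intro a _
        simp [hZdef]; ring
      have : ((A ⊗ₖ B).mulVec z) (i, j) - ((B ⊗ₖ A).mulVec z) (i, j) = 0 := h0
      rw [h1, h2] at this
      linear_combination this
    have hZ0 : Z = 0 := Stmt2Aux.key n m A B hp Z hZ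
    apply hz0
    funext p
    have := congrFun (congrFun hZ0 p.1) p.2
    simpa [hZdef] using this
  · push_neg at hp
    obtain ⟨c, d, hcd, x, hx, hx0⟩ := hp
    refine ⟨x, hx0, ?_⟩
    set u := A.mulVec x with hu
    set w := B.mulVec x with hw
    have hlin : ∀ i, c * u i + d * w i = 0 := by
      intro i
      have := congrFun hx i
      rw [Matrix.add_mulVec, Matrix.smul_mulVec, Matrix.smul_mulVec] at this
      simpa [hu, hw] using this
    have hkey : ∀ a b : Fin m, u a * w b - w a * u b = 0 := by
      intro a b
      have hcd' : c ≠ 0 ∨ d ≠ 0 := by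
        by_cases hc : c = 0
        · exact Or.inr (hcd hc)
        · exact Or.inl hc
      rcases hcd' with hc | hd
      · apply mul_left_cancel₀ hc
        have ha := hlin a
        have hb := hlin b
        rw [mul_zero]
        have e1 : c * u a = -(d * w a) := by linear_combination ha
        have e2 : c * u b = -(d * w b) := by linear_combination hb
        calc c * (u a * w b - w a * u b) = (c * u a) * w b - w a * (c * u b) := by ring
          _ = -(d * w a) * w b - w a * (-(d * w b)) := by rw [e1, e2]
          _ = 0 := by ring
      · apply mul_left_cancel₀ hd
        have ha := hlin a
        have hb := hlin b
        rw [mul_zero]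
        have e1 : d * w a = -(c * u a) := by linear_combination ha
        have e2 : d * w b = -(c * u b) := by linear_combination hb
        calc d * (u a * w b - w a * u b) = u a * (d * w b) - (d * w a) * u b := by ring
          _ = u a * (-(c * u b)) - (-(c * u a)) * u b := by rw [e1, e2]
          _ = 0 := by ring
    funext p
    rw [Matrix.sub_mulVec]
    have h1 : ((A ⊗ₖ B).mulVec (kronVec x x)) p = u p.1 * w p.2 := by
      rw [Stmt2Aux.kron_mulVec]
      have : u p.1 * w p.2 = (∑ a, A p.1 a * x a) * (∑ cc, B p.2 cc * x cc) := by
        simp [hu, hw, Matrix.mulVec, dotProduct]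
      rw [this, Finset.sum_mul_sum]
      apply Finset.sum_congr rfl; intro a _
      apply Finset.sum_congr rfl; intro cc _
      simp [kronVec]; ring
    have h2 : ((B ⊗ₖ A).mulVec (kronVec x x)) p = w p.1 * u p.2 := by
      rw [Stmt2Aux.kron_mulVec]
      have : w p.1 * u p.2 = (∑ a, B p.1 a * x a) * (∑ cc, A p.2 cc * x cc) := by
        simp [hu, hw, Matrix.mulVec, dotProduct]
      rw [this, Finset.sum_mul_sum]
      apply Finset.sum_congr rfl; intro a _
      apply Finset.sum_congr rfl; intro cc _
      simp [kronVec]; ring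
    show ((A ⊗ₖ B).mulVec (kronVec x x)) p - ((B ⊗ₖ A).mulVec (kronVec x x)) p = 0
    rw [h1, h2, hkey p.1 p.2]
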